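/- Let k, ℓ ≥ 1 and ε_3 > 0 with C(k,2)·ε_3/3 + C(k,3)·8·ε_3 < 1. Suppose for each pair 1 ≤ i < j ≤ k we are given ℓ_{ij} bipartite graphs with ℓ/2 ≤ ℓ_{ij} ≤ ℓ, of which at most ε_3·ℓ/6 are 'bad', and for each triple 1 ≤ h < i < j ≤ k, among the ℓ_{hi}·ℓ_{ij}·ℓ_{hj} triads formed by choosing one graph per pair, at most ε_3·ℓ³ are 'irregular'. Then there exists a choice of one bipartite graph P_{ij} per pair such that no chosen P_{ij} is bad and no triad (P_{hi}, P_{ij}, P_{hj}) is irregular. -/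

import Mathlib

open scoped Classical

section Stmt12Aux
open Finset

private lemma stmt12_pair_count {ι : Type*} [Fintype ι] [DecidableEq ι]
    (F : ι → Finset ℕ) (p : ι) (B : Finset ℕ) (hB : B ⊆ F p) :
    ((Fintype.piFinset F).filter (fun f => f p ∈ B)).card
      = B.card * ∏ q ∈ Finset.univ.erase p, (F q).card := by
  have hEq : (Fintype.piFinset F).filter (fun f => f p ∈ B)
      = Fintype.piFinset (fun q => if q = p then B else F q) := by
    ext f
    simp only [Finset.mem_filter, Fintype.mem_piFinset]
    constructor
    · rintro ⟨h1, h2⟩ q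
      by_cases hq : q = p
      · subst hq; simpa using h2
      · rw [if_neg hq]; exact h1 q
    · intro h
      refine ⟨fun q => ?_, by simpa using h p⟩
      by_cases hq : q = p
      · subst hq; exact hB (by simpa using h q)
      · simpa [hq] using h q
  rw [hEq, Fintype.card_piFinset,
    ← Finset.mul_prod_erase Finset.univ _ (Finset.mem_univ p)]
  simp only [if_pos rfl]
  congr 1
  exact Finset.prod_congr rfl fun q hq => by rw [if_neg (Finset.mem_erase.1 hq).1]

private lemma stmt12_triple_count {ι : Type*} [Fintype ι] [DecidableEq ι]
    (F : ι → Finset ℕ) (p1 p2 p3 : ι) (T : Finset (ℕ × ℕ × ℕ)) :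
    ((Fintype.piFinset F).filter (fun f => (f p1, f p2, f p3) ∈ T)).card
      ≤ T.card * ∏ q ∈ Finset.univ.filter (fun q => q ∉ ({p1, p2, p3} : Finset ι)),
          (F q).card := by
  set E := (Fintype.piFinset F).filter (fun f => (f p1, f p2, f p3) ∈ T) with hE
  have hmap : ∀ f ∈ E, (f p1, f p2, f p3) ∈ T := fun f hf => (Finset.mem_filter.1 hf).2
  rw [Finset.card_eq_sum_card_fiberwise hmap]
  have hfib : ∀ b ∈ T, (E.filter (fun f => (f p1, f p2, f p3) = b)).card
      ≤ ∏ q ∈ Finset.univ.filter (fun q => q ∉ ({p1, p2, p3} : Finset ι)), (F q).card := by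
    intro b _
    set s : Finset ι := {p1, p2, p3} with hs
    have key := Finset.card_le_card_of_injOn
      (s := E.filter (fun f => (f p1, f p2, f p3) = b))
      (t := Fintype.piFinset (fun q => if q ∈ s then ({0} : Finset ℕ) else F q))
      (fun f q => if q ∈ s then 0 else f q) ?_ ?_
    · refine key.trans_eq ?_
      rw [Fintype.card_piFinset]
      calc ∏ q, (if q ∈ s then ({0} : Finset ℕ) else F q).card
          = ∏ q, (if q ∈ s then 1 else (F q).card) :=
            Finset.prod_congr rfl fun q _ => by split <;> simp
        _ = _ := by
            rw [Finset.prod_ite]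
            simp
    · intro f hf
      rw [Finset.mem_coe, Fintype.mem_piFinset]
      intro q
      by_cases hq : q ∈ s
      · simp [hq]
      · simp only [if_neg hq]
        have hfΩ : f ∈ Fintype.piFinset F := by
          have := (Finset.mem_filter.1 hf).1
          exact (Finset.mem_filter.1 this).1
        exact Fintype.mem_piFinset.1 hfΩ q
    · intro f1 hf1 f2 hf2 heq
      simp only [Finset.coe_filter, Set.mem_setOf_eq] at hf1 hf2
      have hb1 := hf1.2
      have hb2 := hf2.2
      funext q
      by_cases hq : q ∈ s
      · have h1 : f1 p1 = b.1 ∧ f1 p2 = b.2.1 ∧ f1 p3 = b.2.2 := by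
          have := hb1; rw [Prod.ext_iff, Prod.ext_iff] at this
          exact ⟨this.1, this.2.1, this.2.2⟩
        have h2 : f2 p1 = b.1 ∧ f2 p2 = b.2.1 ∧ f2 p3 = b.2.2 := by
          have := hb2; rw [Prod.ext_iff, Prod.ext_iff] at this
          exact ⟨this.1, this.2.1, this.2.2⟩
        rcases Finset.mem_insert.1 hq with h | h
        · rw [h, h1.1, h2.1]
        · rcases Finset.mem_insert.1 h with h' | h'
          · rw [h', h1.2.1, h2.2.1]
          · rw [Finset.mem_singleton.1 h', h1.2.2, h2.2.2]
      · have := congrFun heq q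
        simpa [if_neg hq] using this
  calc ∑ b ∈ T, (E.filter (fun f => (f p1, f p2, f p3) = b)).card
      ≤ ∑ _b ∈ T, ∏ q ∈ Finset.univ.filter (fun q => q ∉ ({p1, p2, p3} : Finset ι)), (F q).card :=
        Finset.sum_le_sum hfib
    _ = _ := by rw [Finset.sum_const, smul_eq_mul]

private lemma stmt12_pairs_card (k : ℕ) :
    ((Finset.univ.filter (fun p : Fin k × Fin k => p.1 < p.2)).card ≤ k.choose 2) := by
  have := Finset.card_le_card_of_injOn
    (s := Finset.univ.filter (fun p : Fin k × Fin k => p.1 < p.2))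
    (t := Finset.univ.powersetCard 2)
    (fun p : Fin k × Fin k => ({p.1, p.2} : Finset (Fin k))) ?_ ?_
  · simpa using this
  · intro p hp
    simp only [mem_coe, mem_filter] at hp
    simp [Finset.mem_powersetCard, Finset.card_pair hp.2.ne]
  · intro p hp q hq hpq
    simp only [coe_filter, Set.mem_setOf_eq] at hp hq
    simp only at hpq
    have h1 : p.1 ∈ ({q.1, q.2} : Finset (Fin k)) := by rw [← hpq]; simp
    have h2 : p.2 ∈ ({q.1, q.2} : Finset (Fin k)) := by rw [← hpq]; simp
    simp only [mem_insert, mem_singleton] at h1 h2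
    have := hp.2; have := hq.2
    have e1 : p.1.1 = q.1.1 ∧ p.2.1 = q.2.1 := by
      rcases h1 with h | h <;> rcases h2 with h' | h' <;>
        simp only [Fin.lt_def] at * <;> omega
    exact Prod.ext (Fin.ext e1.1) (Fin.ext e1.2)

private lemma stmt12_triples_card (k : ℕ) :
    ((Finset.univ.filter (fun t : Fin k × Fin k × Fin k => t.1 < t.2.1 ∧ t.2.1 < t.2.2)).card
      ≤ k.choose 3) := by
  have := Finset.card_le_card_of_injOn
    (s := Finset.univ.filter (fun t : Fin k × Fin k × Fin k => t.1 < t.2.1 ∧ t.2.1 < t.2.2))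
    (t := Finset.univ.powersetCard 3)
    (fun t : Fin k × Fin k × Fin k => ({t.1, t.2.1, t.2.2} : Finset (Fin k))) ?_ ?_
  · simpa using this
  · intro t ht
    simp only [mem_coe, mem_filter] at ht
    obtain ⟨-, h1, h2⟩ := ht
    have c : ({t.1, t.2.1, t.2.2} : Finset (Fin k)).card = 3 := by
      rw [Finset.card_insert_of_notMem (by simp [h1.ne, (h1.trans h2).ne]),
        Finset.card_pair h2.ne]
    simp [Finset.mem_powersetCard, c]
  · intro p hp q hq hpq
    simp only [coe_filter, Set.mem_setOf_eq] at hp hq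
    simp only at hpq
    have hm : ∀ x : Fin k, (x = p.1 ∨ x = p.2.1 ∨ x = p.2.2) ↔
        (x = q.1 ∨ x = q.2.1 ∨ x = q.2.2) := by
      intro x
      have := Finset.ext_iff.1 hpq x
      simpa [mem_insert, mem_singleton] using this
    obtain ⟨hp1, hp2⟩ := hp.2
    obtain ⟨hq1, hq2⟩ := hq.2
    have h1 := (hm p.1).1 (Or.inl rfl)
    have h2 := (hm p.2.1).1 (Or.inr (Or.inl rfl))
    have h3 := (hm p.2.2).1 (Or.inr (Or.inr rfl))
    have h4 := (hm q.1).2 (Or.inl rfl)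
    have h5 := (hm q.2.1).2 (Or.inr (Or.inl rfl))
    have h6 := (hm q.2.2).2 (Or.inr (Or.inr rfl))
    have e : p.1.1 = q.1.1 ∧ p.2.1.1 = q.2.1.1 ∧ p.2.2.1 = q.2.2.1 := by
      simp only [Fin.ext_iff, Fin.lt_def] at *
      omega
    exact Prod.ext (Fin.ext e.1) (Prod.ext (Fin.ext e.2.1) (Fin.ext e.2.2))

end Stmt12Aux

set_option maxHeartbeats 2000000 in
theorem stmt_12 (k ℓ : ℕ) (hk : 1 ≤ k) (hℓ : 1 ≤ ℓ) (ε3 : ℝ) (hε3 : 0 ≤ ε3)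
    (hsum : (k.choose 2 : ℝ) * ε3 / 3 + (k.choose 3 : ℝ) * 8 * ε3 < 1)
    (L : Fin k → Fin k → ℕ)
    (hL : ∀ i j : Fin k, i < j → (ℓ : ℝ) / 2 ≤ (L i j : ℝ) ∧ L i j ≤ ℓ)
    (Bad : Fin k → Fin k → Finset ℕ)
    (hBadsub : ∀ i j : Fin k, i < j → Bad i j ⊆ Finset.range (L i j))
    (hBad : ∀ i j : Fin k, i < j → ((Bad i j).card : ℝ) ≤ ε3 * ℓ / 6)
    (Irr : Fin k → Fin k → Fin k → Finset (ℕ × ℕ × ℕ))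
    (hIrr : ∀ h i j : Fin k, h < i → i < j → ((Irr h i j).card : ℝ) ≤ ε3 * (ℓ : ℝ) ^ 3) :
    ∃ a : Fin k → Fin k → ℕ,
      (∀ i j : Fin k, i < j → a i j < L i j ∧ a i j ∉ Bad i j) ∧
      (∀ h i j : Fin k, h < i → i < j → (a h i, a i j, a h j) ∉ Irr h i j) := by
  classical
  set L' : Fin k × Fin k → ℕ := fun p => if p.1 < p.2 then L p.1 p.2 else 1 with hL'def
  have hℓR : (1 : ℝ) ≤ (ℓ : ℝ) := by exact_mod_cast hℓ
  have hL'low : ∀ p : Fin k × Fin k, p.1 < p.2 → (ℓ : ℝ) / 2 ≤ (L' p : ℝ) := by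
    intro p hp
    simpa [hL'def, hp] using (hL p.1 p.2 hp).1
  have hL'pos : ∀ p : Fin k × Fin k, 0 < L' p := by
    intro p
    by_cases hp : p.1 < p.2
    · rcases Nat.eq_zero_or_pos (L' p) with h0 | h
      · exfalso
        have := hL'low p hp
        rw [h0] at this
        push_cast at this
        linarith
      · exact h
    · simp [hL'def, hp]
  set Ω : Finset ((Fin k × Fin k) → ℕ) :=
    Fintype.piFinset (fun p => Finset.range (L' p)) with hΩdef
  set N : ℝ := (Ω.card : ℝ) with hNdef
  have hΩcard : Ω.card = ∏ p, L' p := by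
    rw [hΩdef, Fintype.card_piFinset]
    simp
  have hNpos : 0 < N := by
    rw [hNdef, hΩcard]
    push_cast
    exact Finset.prod_pos fun p _ => by exact_mod_cast hL'pos p
  -- events
  set Pairs : Finset (Fin k × Fin k) := Finset.univ.filter (fun p => p.1 < p.2) with hPairs
  set Trips : Finset (Fin k × Fin k × Fin k) :=
    Finset.univ.filter (fun t => t.1 < t.2.1 ∧ t.2.1 < t.2.2) with hTrips
  set E1 : (Fin k × Fin k) → Finset ((Fin k × Fin k) → ℕ) :=
    fun p => Ω.filter (fun f => f p ∈ Bad p.1 p.2) with hE1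
  set E2 : (Fin k × Fin k × Fin k) → Finset ((Fin k × Fin k) → ℕ) :=
    fun t => Ω.filter (fun f =>
      (f (t.1, t.2.1), f (t.2.1, t.2.2), f (t.1, t.2.2)) ∈ Irr t.1 t.2.1 t.2.2) with hE2
  -- bound for pair events
  have hE1bound : ∀ p ∈ Pairs, ((E1 p).card : ℝ) ≤ ε3 / 3 * N := by
    intro p hp
    rw [hPairs, Finset.mem_filter] at hp
    have hlt := hp.2
    have hsub : Bad p.1 p.2 ⊆ Finset.range (L' p) := by
      rw [hL'def]; simp only [if_pos hlt]
      exact hBadsub p.1 p.2 hlt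
    have hcard := stmt12_pair_count (fun q => Finset.range (L' q)) p (Bad p.1 p.2) hsub
    simp only [Finset.card_range] at hcard
    have hcardR : ((E1 p).card : ℝ)
        = ((Bad p.1 p.2).card : ℝ) * ∏ q ∈ Finset.univ.erase p, (L' q : ℝ) := by
      rw [hE1, hcard]; push_cast; ring
    have hNsplit : N = (L' p : ℝ) * ∏ q ∈ Finset.univ.erase p, (L' q : ℝ) := by
      rw [hNdef, hΩcard, ← Finset.mul_prod_erase Finset.univ _ (Finset.mem_univ p)]
      push_cast; ring
    set R : ℝ := ∏ q ∈ Finset.univ.erase p, (L' q : ℝ) with hR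
    have hR0 : 0 ≤ R := Finset.prod_nonneg fun q _ => by positivity
    have hBc := hBad p.1 p.2 hlt
    have hlow := hL'low p hlt
    rw [hcardR, hNsplit]
    nlinarith [mul_le_mul_of_nonneg_right hBc hR0, mul_nonneg hε3 hR0,
      mul_le_mul_of_nonneg_right hlow (mul_nonneg hε3 hR0)]
  -- bound for triple events
  have hE2bound : ∀ t ∈ Trips, ((E2 t).card : ℝ) ≤ 8 * ε3 * N := by
    intro t ht
    rw [hTrips, Finset.mem_filter] at ht
    obtain ⟨-, h1, h2⟩ := ht
    obtain ⟨h, i, j⟩ := t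
    simp only at h1 h2 ⊢
    set p1 : Fin k × Fin k := (h, i) with hp1
    set p2 : Fin k × Fin k := (i, j) with hp2
    set p3 : Fin k × Fin k := (h, j) with hp3
    have hd12 : p1 ≠ p2 := by
      rw [hp1, hp2]; intro he; exact h1.ne (congrArg Prod.fst he)
    have hd13 : p1 ≠ p3 := by
      rw [hp1, hp3]; intro he; exact h2.ne (congrArg Prod.snd he)
    have hd23 : p2 ≠ p3 := by
      rw [hp2, hp3]; intro he; exact h1.ne ((congrArg Prod.fst he).symm)
    have hcount := stmt12_triple_count (fun q => Finset.range (L' q)) p1 p2 p3 (Irr h i j)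
    simp only [Finset.card_range] at hcount
    set F : ℝ := ∏ q ∈ Finset.univ.filter (fun q => q ∉ ({p1, p2, p3} : Finset (Fin k × Fin k))),
      (L' q : ℝ) with hF
    have hF0 : 0 ≤ F := Finset.prod_nonneg fun q _ => by positivity
    have hE2R : ((E2 (h, i, j)).card : ℝ) ≤ ((Irr h i j).card : ℝ) * F := by
      rw [hE2]
      calc ((Ω.filter (fun f => (f (h, i), f (i, j), f (h, j)) ∈ Irr h i j)).card : ℝ)
          ≤ (((Irr h i j).card *
              ∏ q ∈ Finset.univ.filter (fun q => q ∉ ({p1, p2, p3} : Finset (Fin k × Fin k))),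
                L' q : ℕ) : ℝ) := by exact_mod_cast hcount
        _ = ((Irr h i j).card : ℝ) * F := by push_cast; ring
    have hNsplit : N = (L' p1 : ℝ) * (L' p2 : ℝ) * (L' p3 : ℝ) * F := by
      have hsplit := Finset.prod_filter_mul_prod_filter_not Finset.univ
        (fun q => q ∈ ({p1, p2, p3} : Finset (Fin k × Fin k))) (fun q => (L' q : ℝ))
      have hfil : Finset.univ.filter
          (fun q => q ∈ ({p1, p2, p3} : Finset (Fin k × Fin k))) = {p1, p2, p3} := by
        ext q; simp
      have hprod3 : ∏ q ∈ ({p1, p2, p3} : Finset (Fin k × Fin k)), (L' q : ℝ)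
          = (L' p1 : ℝ) * (L' p2 : ℝ) * (L' p3 : ℝ) := by
        rw [Finset.prod_insert (by simp [hd12, hd13]),
          Finset.prod_insert (by simp [hd23]), Finset.prod_singleton, mul_assoc]
      rw [hNdef, hΩcard]
      push_cast
      rw [← hsplit, hfil, hprod3]
    have hIc := hIrr h i j h1 h2
    have l1 := hL'low p1 h1
    have l2 := hL'low p2 h2
    have l3 := hL'low p3 (h1.trans h2)
    have hl0 : (0 : ℝ) ≤ (ℓ : ℝ) / 2 := by linarith
    have hcube : (ℓ : ℝ) ^ 3 ≤ 8 * ((L' p1 : ℝ) * (L' p2 : ℝ) * (L' p3 : ℝ)) := by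
      have m1 : (ℓ : ℝ) / 2 * ((ℓ : ℝ) / 2) ≤ (L' p1 : ℝ) * (L' p2 : ℝ) :=
        mul_le_mul l1 l2 hl0 (by positivity)
      have m2 : (ℓ : ℝ) / 2 * ((ℓ : ℝ) / 2) * ((ℓ : ℝ) / 2)
          ≤ (L' p1 : ℝ) * (L' p2 : ℝ) * (L' p3 : ℝ) :=
        mul_le_mul m1 l3 hl0 (by positivity)
      nlinarith
    calc ((E2 (h, i, j)).card : ℝ)
        ≤ ((Irr h i j).card : ℝ) * F := hE2R
      _ ≤ ε3 * (ℓ : ℝ) ^ 3 * F := mul_le_mul_of_nonneg_right hIc hF0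
      _ ≤ ε3 * (8 * ((L' p1 : ℝ) * (L' p2 : ℝ) * (L' p3 : ℝ))) * F := by
          have := mul_le_mul_of_nonneg_left hcube hε3
          exact mul_le_mul_of_nonneg_right this hF0
      _ = 8 * ε3 * ((L' p1 : ℝ) * (L' p2 : ℝ) * (L' p3 : ℝ) * F) := by ring
      _ = 8 * ε3 * N := by rw [← hNsplit]
  -- union bound
  set BadSet : Finset ((Fin k × Fin k) → ℕ) :=
    Pairs.biUnion E1 ∪ Trips.biUnion E2 with hBadSet
  have hBScard : (BadSet.card : ℝ) < N := by
    have h1 : (BadSet.card : ℝ) ≤ (∑ p ∈ Pairs, ((E1 p).card : ℝ))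
        + ∑ t ∈ Trips, ((E2 t).card : ℝ) := by
      have ha : BadSet.card ≤ (Pairs.biUnion E1).card + (Trips.biUnion E2).card :=
        Finset.card_union_le _ _
      have hb : (Pairs.biUnion E1).card ≤ ∑ p ∈ Pairs, (E1 p).card :=
        Finset.card_biUnion_le
      have hc : (Trips.biUnion E2).card ≤ ∑ t ∈ Trips, (E2 t).card :=
        Finset.card_biUnion_le
      push_cast
      exact_mod_cast le_trans (Nat.cast_le.2 ha)
        (by push_cast; exact add_le_add (by exact_mod_cast hb) (by exact_mod_cast hc))
    have h2 : (∑ p ∈ Pairs, ((E1 p).card : ℝ)) ≤ (Pairs.card : ℝ) * (ε3 / 3 * N) := by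
      calc ∑ p ∈ Pairs, ((E1 p).card : ℝ) ≤ ∑ _p ∈ Pairs, (ε3 / 3 * N) :=
            Finset.sum_le_sum hE1bound
        _ = (Pairs.card : ℝ) * (ε3 / 3 * N) := by rw [Finset.sum_const]; push_cast; ring
    have h3 : (∑ t ∈ Trips, ((E2 t).card : ℝ)) ≤ (Trips.card : ℝ) * (8 * ε3 * N) := by
      calc ∑ t ∈ Trips, ((E2 t).card : ℝ) ≤ ∑ _t ∈ Trips, (8 * ε3 * N) :=
            Finset.sum_le_sum hE2bound
        _ = (Trips.card : ℝ) * (8 * ε3 * N) := by rw [Finset.sum_const]; push_cast; ring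
    have hPc : (Pairs.card : ℝ) ≤ (k.choose 2 : ℝ) := by exact_mod_cast stmt12_pairs_card k
    have hTc : (Trips.card : ℝ) ≤ (k.choose 3 : ℝ) := by exact_mod_cast stmt12_triples_card k
    have h4 : (Pairs.card : ℝ) * (ε3 / 3 * N) ≤ (k.choose 2 : ℝ) * (ε3 / 3 * N) := by
      apply mul_le_mul_of_nonneg_right hPc
      positivity
    have h5 : (Trips.card : ℝ) * (8 * ε3 * N) ≤ (k.choose 3 : ℝ) * (8 * ε3 * N) := by
      apply mul_le_mul_of_nonneg_right hTc
      positivity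
    have h6 : (k.choose 2 : ℝ) * (ε3 / 3 * N) + (k.choose 3 : ℝ) * (8 * ε3 * N)
        = ((k.choose 2 : ℝ) * ε3 / 3 + (k.choose 3 : ℝ) * 8 * ε3) * N := by ring
    have h7 : ((k.choose 2 : ℝ) * ε3 / 3 + (k.choose 3 : ℝ) * 8 * ε3) * N < 1 * N :=
      mul_lt_mul_of_pos_right hsum hNpos
    linarith
  have hlt : BadSet.card < Ω.card := by
    rw [hNdef] at hBScard
    exact_mod_cast hBScard
  have hex : ∃ f ∈ Ω, f ∉ BadSet := by
    by_contra hcon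
    push_neg at hcon
    have hsub : Ω ⊆ BadSet := fun f hf => hcon f hf
    exact absurd (Finset.card_le_card hsub) (by omega)
  obtain ⟨f, hfΩ, hfB⟩ := hex
  refine ⟨fun i j => f (i, j), ?_, ?_⟩
  · intro i j hij
    constructor
    · have := Fintype.mem_piFinset.1 hfΩ (i, j)
      rw [Finset.mem_range] at this
      simpa [hL'def, hij] using this
    · intro hmem
      apply hfB
      rw [hBadSet, Finset.mem_union]
      left
      refine Finset.mem_biUnion.2 ⟨(i, j), ?_, ?_⟩
      · rw [hPairs, Finset.mem_filter]; exact ⟨Finset.mem_univ _, hij⟩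
      · rw [hE1, Finset.mem_filter]; exact ⟨hfΩ, hmem⟩
  · intro h i j h1 h2 hmem
    apply hfB
    rw [hBadSet, Finset.mem_union]
    right
    refine Finset.mem_biUnion.2 ⟨(h, i, j), ?_, ?_⟩
    · rw [hTrips, Finset.mem_filter]; exact ⟨Finset.mem_univ _, h1, h2⟩
    · rw [hE2, Finset.mem_filter]; exact ⟨hfΩ, hmem⟩
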